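/- The softmax function g on ℝ^n (n ≥ 1) is 1-Lipschitz from the ∞-norm to the ∞-norm: for all x, e ∈ ℝ^n, ‖g(x + e) − g(x)‖_∞ ≤ ‖e‖_∞. -/

import Mathlib

open Real Finset

private lemma hasDerivAt_exp2 (u : ℝ) :
    HasDerivAt (fun v : ℝ => Real.exp (2 * v)) (2 * Real.exp (2 * u)) u := by
  have h : HasDerivAt (fun v : ℝ => 2 * v) 2 u := by
    simpa using (hasDerivAt_id u).const_mul 2
  simpa [mul_comm] using h.exp

private lemma G_deriv (u : ℝ) :
    HasDerivAt (fun v : ℝ => 1 + (2 * v - 1) * Real.exp (2 * v))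
      (4 * u * Real.exp (2 * u)) u := by
  have h1 : HasDerivAt (fun v : ℝ => 2 * v - 1) 2 u := by
    simpa using ((hasDerivAt_id u).const_mul 2).sub_const 1
  have := (h1.mul (hasDerivAt_exp2 u)).const_add 1
  exact this.congr_deriv (by ring)

private lemma G_nonneg {u : ℝ} (hu : 0 ≤ u) :
    0 ≤ 1 + (2 * u - 1) * Real.exp (2 * u) := by
  have hmono : MonotoneOn (fun v : ℝ => 1 + (2 * v - 1) * Real.exp (2 * v)) (Set.Ici 0) := by
    apply monotoneOn_of_deriv_nonneg (convex_Ici 0)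
    · exact (by fun_prop : Continuous fun v : ℝ => 1 + (2 * v - 1) * Real.exp (2 * v)).continuousOn
    · intro v _
      exact (G_deriv v).differentiableAt.differentiableWithinAt
    · intro v hv
      rw [interior_Ici] at hv
      rw [(G_deriv v).deriv]
      have hv' : (0:ℝ) < v := hv
      have := (Real.exp_pos (2 * v)).le
      exact mul_nonneg (by linarith) this
  have := hmono (Set.self_mem_Ici) hu hu
  simpa using this

private lemma F_deriv (u : ℝ) :
    HasDerivAt (fun v : ℝ => v * (Real.exp (2 * v) + 1) - (Real.exp (2 * v) - 1))
      (1 + (2 * u - 1) * Real.exp (2 * u)) u := by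
  have h1 : HasDerivAt (fun v : ℝ => v * (Real.exp (2 * v) + 1))
      (1 * (Real.exp (2 * u) + 1) + u * (2 * Real.exp (2 * u))) u :=
    (hasDerivAt_id u).mul ((hasDerivAt_exp2 u).add_const 1)
  have h2 := h1.sub ((hasDerivAt_exp2 u).sub_const 1)
  exact h2.congr_deriv (by ring)

/-- `tanh t ≤ t` in the form `exp (2t) - 1 ≤ t * (exp (2t) + 1)` for `t ≥ 0`. -/
private lemma tanh_aux {t : ℝ} (ht : 0 ≤ t) :
    Real.exp (2 * t) - 1 ≤ t * (Real.exp (2 * t) + 1) := by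
  have hmono : MonotoneOn (fun v : ℝ => v * (Real.exp (2 * v) + 1) - (Real.exp (2 * v) - 1))
      (Set.Ici 0) := by
    apply monotoneOn_of_deriv_nonneg (convex_Ici 0)
    · exact (by fun_prop : Continuous fun v : ℝ =>
        v * (Real.exp (2 * v) + 1) - (Real.exp (2 * v) - 1)).continuousOn
    · intro v _
      exact (F_deriv v).differentiableAt.differentiableWithinAt
    · intro v hv
      rw [interior_Ici] at hv
      rw [(F_deriv v).deriv]
      exact G_nonneg hv.le
  have := hmono (Set.self_mem_Ici) ht ht
  norm_num at this
  linarith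

/-- per-component multiplicative bound for softmax. -/
private lemma comp_le {n : ℕ} (hn : 0 < n) (x e : Fin n → ℝ) (t : ℝ)
    (ht : ∀ i, |e i| ≤ t) (j : Fin n) :
    Real.exp (x j + e j) / (∑ i, Real.exp (x i + e i)) ≤
      Real.exp (2 * t) * (Real.exp (x j) / ∑ i, Real.exp (x i)) := by
  haveI : Nonempty (Fin n) := Fin.pos_iff_nonempty.mp hn
  have hS : 0 < ∑ i, Real.exp (x i) :=
    Finset.sum_pos (fun i _ => Real.exp_pos _) Finset.univ_nonempty
  have hU : 0 < ∑ i, Real.exp (x i + e i) :=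
    Finset.sum_pos (fun i _ => Real.exp_pos _) Finset.univ_nonempty
  have hUge : Real.exp (-t) * ∑ i, Real.exp (x i) ≤ ∑ i, Real.exp (x i + e i) := by
    rw [Finset.mul_sum]
    apply Finset.sum_le_sum
    intro i _
    rw [← Real.exp_add]
    exact Real.exp_le_exp.mpr (by have := (abs_le.mp (ht i)).1; linarith)
  have hnum : Real.exp (x j + e j) ≤ Real.exp t * Real.exp (x j) := by
    rw [← Real.exp_add]
    exact Real.exp_le_exp.mpr (by have := (abs_le.mp (ht j)).2; linarith)
  have h1 : Real.exp (x j + e j) / (∑ i, Real.exp (x i + e i)) ≤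
      (Real.exp t * Real.exp (x j)) / (Real.exp (-t) * ∑ i, Real.exp (x i)) := by
    apply div_le_div₀ (by positivity) hnum (by positivity) hUge
  calc Real.exp (x j + e j) / (∑ i, Real.exp (x i + e i))
      ≤ (Real.exp t * Real.exp (x j)) / (Real.exp (-t) * ∑ i, Real.exp (x i)) := h1
    _ = Real.exp (2 * t) * (Real.exp (x j) / ∑ i, Real.exp (x i)) := by
        rw [Real.exp_neg]
        field_simp
        rw [sq, ← Real.exp_add, mul_comm]
        congr 2
        ring
  
/-- one-sided bound. -/
private lemma one_side {n : ℕ} (hn : 0 < n) (x e : Fin n → ℝ) (t : ℝ)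
    (ht : ∀ i, |e i| ≤ t) (j : Fin n) :
    Real.exp (x j + e j) / (∑ i, Real.exp (x i + e i))
      - Real.exp (x j) / (∑ i, Real.exp (x i)) ≤ t := by
  haveI : Nonempty (Fin n) := Fin.pos_iff_nonempty.mp hn
  have ht0 : 0 ≤ t := le_trans (abs_nonneg _) (ht j)
  set s : ℝ := Real.exp (2 * t) with hs
  have hs1 : 1 ≤ s := by
    rw [hs, show (1:ℝ) = Real.exp 0 by simp]
    exact Real.exp_le_exp.mpr (by linarith)
  have hT : s - 1 ≤ t * (s + 1) := by have := tanh_aux ht0; linarith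
  have hS : 0 < ∑ i, Real.exp (x i) :=
    Finset.sum_pos (fun i _ => Real.exp_pos _) Finset.univ_nonempty
  have hU : 0 < ∑ i, Real.exp (x i + e i) :=
    Finset.sum_pos (fun i _ => Real.exp_pos _) Finset.univ_nonempty
  set a : ℝ := Real.exp (x j + e j) / (∑ i, Real.exp (x i + e i)) with ha
  set b : ℝ := Real.exp (x j) / (∑ i, Real.exp (x i)) with hb
  have hb0 : 0 ≤ b := by positivity
  -- a ≤ s * b
  have hab : a ≤ s * b := comp_le hn x e t ht j
  -- reverse components: exp (x i) / S ≤ s * (exp (x i + e i) / U)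
  have hrev : ∀ i : Fin n, Real.exp (x i) / (∑ k, Real.exp (x k)) ≤
      s * (Real.exp (x i + e i) / (∑ k, Real.exp (x k + e k))) := by
    intro i
    have := comp_le hn (fun k => x k + e k) (fun k => -e k) t
      (fun k => by simpa using ht k) i
    simpa using this
  by_cases hc : a * (s + 1) ≤ s
  · -- a ≤ s/(s+1): use a - b ≤ a (1 - 1/s)
    have hsb : a - b ≤ a - a / s := by
      have : a / s ≤ b := by
        rw [div_le_iff₀ (by linarith)]
        linarith [hab]
      linarith
    have h2 : a - a / s ≤ t := by
      rw [div_eq_mul_inv]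
      have hsne : s ≠ 0 := by linarith
      have key : (a - a * s⁻¹) * (s * (s + 1)) ≤ t * (s * (s + 1)) := by
        have e1 : (a - a * s⁻¹) * (s * (s + 1)) = a * (s - 1) * (s + 1) := by
          field_simp
        rw [e1]
        have h3 : a * (s - 1) * (s + 1) ≤ s * (s - 1) := by
          have := mul_le_mul_of_nonneg_right hc (by linarith : (0:ℝ) ≤ s - 1)
          nlinarith
        have h4 : s * (s - 1) ≤ t * (s * (s + 1)) := by nlinarith
        linarith
      have hpos : 0 < s * (s + 1) := by nlinarith
      exact le_of_mul_le_mul_right key hpos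
    linarith
  · -- a > s/(s+1): use complements
    push_neg at hc
    -- sums equal one
    have hsumU : ∑ i, Real.exp (x i + e i) / (∑ k, Real.exp (x k + e k)) = 1 := by
      rw [← Finset.sum_div]; field_simp
    have hsumS : ∑ i, Real.exp (x i) / (∑ k, Real.exp (x k)) = 1 := by
      rw [← Finset.sum_div]; field_simp
    have h1a : 1 - a = ∑ i ∈ Finset.univ.erase j,
        Real.exp (x i + e i) / (∑ k, Real.exp (x k + e k)) := by
      rw [Finset.sum_erase_eq_sub (Finset.mem_univ j), hsumU, ha]
    have h1b : 1 - b = ∑ i ∈ Finset.univ.erase j,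
        Real.exp (x i) / (∑ k, Real.exp (x k)) := by
      rw [Finset.sum_erase_eq_sub (Finset.mem_univ j), hsumS, hb]
    have hcomp : 1 - b ≤ s * (1 - a) := by
      rw [h1a, h1b, Finset.mul_sum]
      exact Finset.sum_le_sum fun i _ => hrev i
    -- (1-a)(s+1) ≤ 1
    have hca : (1 - a) * (s + 1) ≤ 1 := by nlinarith
    -- a - b ≤ (s-1)(1-a) ≤ (s-1)/(s+1) ≤ t
    nlinarith [mul_le_mul_of_nonneg_right hca (by linarith : (0:ℝ) ≤ s - 1),
      mul_pos (by linarith : (0:ℝ) < s + 1) (by linarith : (0:ℝ) < s + 1)]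

/-- The softmax function `g x = fun j => exp (x j) / ∑ i, exp (x i)` on `Fin n → ℝ`
(`n ≥ 1`) is `1`-Lipschitz from the ∞-norm to the ∞-norm:
`‖g (x + e) - g x‖_∞ ≤ ‖e‖_∞`. (The norm on `Fin n → ℝ` is the sup norm.) -/
theorem softmax_lipschitz (n : ℕ) (hn : 1 ≤ n) (x e : Fin n → ℝ) :
    ‖(fun j => Real.exp (x j + e j) / ∑ i, Real.exp (x i + e i))
        - (fun j => Real.exp (x j) / ∑ i, Real.exp (x i))‖ ≤ ‖e‖ := by
  have hn' : 0 < n := hn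
  have ht : ∀ i, |e i| ≤ ‖e‖ := fun i => by
    simpa [Real.norm_eq_abs] using norm_le_pi_norm e i
  rw [pi_norm_le_iff_of_nonneg (norm_nonneg e)]
  intro j
  rw [Pi.sub_apply, Real.norm_eq_abs, abs_sub_le_iff]
  constructor
  · exact one_side hn' x e ‖e‖ ht j
  · have := one_side hn' (fun i => x i + e i) (fun i => -e i) ‖e‖
      (fun i => by simpa using ht i) j
    simpa using this
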